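/- Let 0 < a < 1, 0 < α < 1 with α + a ≠ 1, and 3/4 < t < 1. Define Ψ(t) = ∫_0^t (t-s)^{-α} (1-s)^{-a} ds. Then there exists c > 1 depending only on a, α such that: if α + a > 1, then c^{-1}(1-t)^{1-α-a} ≤ Ψ(t) ≤ c(1-t)^{1-α-a}; and if α + a < 1, then c^{-1} ≤ Ψ(t) ≤ c. -/
import Mathlib

open Real intervalIntegral

lemma aux_int {r : ℝ} (hr : -1 < -r) (p q d : ℝ) :
    IntervalIntegrable (fun s => (d - s) ^ (-r)) MeasureTheory.volume p q := by
  have h := (intervalIntegrable_rpow' (a := d - p) (b := d - q) hr).comp_sub_left d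
  simpa using h

lemma aux_val1 {r : ℝ} (hr1 : r < 1) (p q : ℝ) :
    (∫ s in p..q, (q - s) ^ (-r)) = (q - p) ^ (1 - r) / (1 - r) := by
  rw [integral_comp_sub_left (fun u => u ^ (-r)) q, sub_self,
    integral_rpow (Or.inl (by linarith)), Real.zero_rpow (by linarith : -r + 1 ≠ 0)]
  rw [show -r + 1 = 1 - r by ring, sub_zero]

lemma aux_val2 {r : ℝ} (hr : r ≠ 1) (p q : ℝ) (hpq : p ≤ q) (hq : q < 1) :
    (∫ s in p..q, (1 - s) ^ (-r)) = ((1 - p) ^ (1 - r) - (1 - q) ^ (1 - r)) / (1 - r) := by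
  rw [integral_comp_sub_left (fun u => u ^ (-r)) 1,
    integral_rpow (Or.inr ⟨fun h => hr (by linarith [neg_inj.mp h]), ?_⟩)]
  · rw [show -r + 1 = 1 - r by ring]
  · intro h
    rw [Set.mem_uIcc] at h
    rcases h with ⟨h1, h2⟩ | ⟨h1, h2⟩ <;> linarith

-- key per-t bounds, collected
lemma aux_main (a α : ℝ) (ha0 : 0 < a) (ha1 : a < 1) (hα0 : 0 < α)
    (hα1 : α < 1) (hne : α + a ≠ 1) (t : ℝ) (ht3 : 3/4 < t) (ht1 : t < 1) :
    (2 * (1 - t)) ^ (-a) * ((1 - t) ^ (1 - α) / (1 - α)) ≤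
        (∫ s in (0:ℝ)..t, (t - s) ^ (-α) * (1 - s) ^ (-a)) ∧
    (1/2 : ℝ) ≤ (∫ s in (0:ℝ)..t, (t - s) ^ (-α) * (1 - s) ^ (-a)) ∧
    (∫ s in (0:ℝ)..t, (t - s) ^ (-α) * (1 - s) ^ (-a)) ≤
      2 ^ α * ((1 - (2 * (1 - t)) ^ (1 - (α + a))) / (1 - (α + a)))
        + (1 - t) ^ (-a) * ((1 - t) ^ (1 - α) / (1 - α)) := by
  set ε := 1 - t with hε
  have hε0 : 0 < ε := by simp [hε]; linarith
  have hε4 : ε < 1/4 := by simp [hε]; linarith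
  set m := 2 * t - 1 with hm
  have hm0 : (1/2:ℝ) < m := by simp [hm]; linarith
  have hmt : m < t := by simp [hm]; linarith
  set F : ℝ → ℝ := fun s => (t - s) ^ (-α) * (1 - s) ^ (-a) with hF
  -- continuity of second factor
  have hcont : ContinuousOn (fun s => (1 - s) ^ (-a)) (Set.uIcc 0 t) := by
    apply ContinuousOn.rpow_const
    · exact (continuous_const.sub continuous_id).continuousOn
    · intro x hx
      rw [Set.uIcc_of_le (by linarith)] at hx
      exact Or.inl (by simp; intro h; nlinarith [hx.2])
  have hint : IntervalIntegrable F MeasureTheory.volume 0 t :=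
    (aux_int (by linarith) 0 t t).mul_continuousOn hcont
  have hsub : ∀ p q : ℝ, 0 ≤ p → p ≤ q → q ≤ t → IntervalIntegrable F MeasureTheory.volume p q := by
    intro p q hp hpq hq
    apply hint.mono_set
    rw [Set.uIcc_of_le hpq, Set.uIcc_of_le (show (0:ℝ) ≤ t by linarith)]
    exact Set.Icc_subset_Icc hp hq
  -- splits
  have hsplit : (∫ s in (0:ℝ)..m, F s) + (∫ s in m..t, F s) = ∫ s in (0:ℝ)..t, F s :=
    integral_add_adjacent_intervals (hsub 0 m le_rfl (by linarith) hmt.le)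
      (hsub m t (by linarith) hmt.le le_rfl)
  have hsplit2 : (∫ s in (0:ℝ)..(1/2 : ℝ), F s) + (∫ s in (1/2 : ℝ)..t, F s)
      = ∫ s in (0:ℝ)..t, F s :=
    integral_add_adjacent_intervals (hsub 0 (1/2) le_rfl (by norm_num) (by linarith))
      (hsub (1/2) t (by norm_num) (by linarith) le_rfl)
  -- nonnegativity
  have hFnn : ∀ s ∈ Set.Icc (0:ℝ) t, 0 ≤ F s := by
    intro s hs
    exact mul_nonneg (Real.rpow_nonneg (by linarith [hs.2]) _)
      (Real.rpow_nonneg (by linarith [hs.2]) _)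
  have hnn1 : 0 ≤ ∫ s in (0:ℝ)..m, F s :=
    integral_nonneg (by linarith) (fun s hs => hFnn s ⟨hs.1, by linarith [hs.2]⟩)
  have hnn2 : 0 ≤ ∫ s in (1/2:ℝ)..t, F s :=
    integral_nonneg (by linarith) (fun s hs => hFnn s ⟨by linarith [hs.1], hs.2⟩)
  -- value of ∫_m^t (t-s)^(-α)
  have hval1 : (∫ s in m..t, (t - s) ^ (-α)) = ε ^ (1 - α) / (1 - α) := by
    rw [aux_val1 hα1 m t, show t - m = ε by simp [hm, hε]; ring]
  refine ⟨?_, ?_, ?_⟩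
  · -- lower bound near part
    calc (2 * ε) ^ (-a) * (ε ^ (1 - α) / (1 - α))
        = ∫ s in m..t, (2 * ε) ^ (-a) * (t - s) ^ (-α) := by
          rw [integral_const_mul, hval1]
      _ ≤ ∫ s in m..t, F s := by
          apply integral_mono_on hmt.le ((aux_int (by linarith) m t t).const_mul _)
            (hsub m t (by linarith) hmt.le le_rfl)
          intro s hs
          rw [mul_comm]
          apply mul_le_mul_of_nonneg_left _ (Real.rpow_nonneg (by linarith [hs.2]) _)
          exact Real.rpow_le_rpow_of_nonpos (by linarith [hs.2])
            (by simp [hm, hε] at hs ⊢; linarith [hs.1]) (by linarith)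
      _ ≤ ∫ s in (0:ℝ)..t, F s := by rw [← hsplit]; linarith
  · -- lower bound 1/2
    calc (1/2 : ℝ) = ∫ s in (0:ℝ)..(1/2:ℝ), (1:ℝ) := by simp
      _ ≤ ∫ s in (0:ℝ)..(1/2:ℝ), F s := by
          apply integral_mono_on (by norm_num) intervalIntegrable_const
            (hsub 0 (1/2) le_rfl (by norm_num) (by linarith))
          intro s hs
          have h1 : 0 < t - s := by linarith [hs.2]
          have h2 : t - s ≤ 1 := by linarith [hs.1]
          have h3 : 0 < 1 - s := by linarith [hs.2]
          have h4 : 1 - s ≤ 1 := by linarith [hs.1]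
          have := Real.one_le_rpow_of_pos_of_le_one_of_nonpos h1 h2 (by linarith : -α ≤ 0)
          have := Real.one_le_rpow_of_pos_of_le_one_of_nonpos h3 h4 (by linarith : -a ≤ 0)
          simp only [hF]
          nlinarith
      _ ≤ ∫ s in (0:ℝ)..t, F s := by rw [← hsplit2]; linarith
  · -- upper bound
    have hup1 : (∫ s in (0:ℝ)..m, F s)
        ≤ 2 ^ α * ((1 - (2 * ε) ^ (1 - (α + a))) / (1 - (α + a))) := by
      have hg : ContinuousOn (fun s => 2 ^ α * (1 - s) ^ (-(α + a))) (Set.uIcc 0 m) := by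
        apply ContinuousOn.mul continuousOn_const
        apply ContinuousOn.rpow_const ((continuous_const.sub continuous_id).continuousOn)
        intro x hx
        rw [Set.uIcc_of_le (by linarith)] at hx
        exact Or.inl (by simp; intro h; nlinarith [hx.2])
      calc (∫ s in (0:ℝ)..m, F s)
          ≤ ∫ s in (0:ℝ)..m, 2 ^ α * (1 - s) ^ (-(α + a)) := by
            apply integral_mono_on (by linarith) (hsub 0 m le_rfl (by linarith) hmt.le)
              (hg.intervalIntegrable)
            intro s hs
            have h1s : 0 < 1 - s := by nlinarith [hs.2]
            have hhalf : (1 - s) / 2 ≤ t - s := by simp [hm] at hs; linarith [hs.2]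
            have hkey : (t - s) ^ (-α) ≤ 2 ^ α * (1 - s) ^ (-α) := by
              have h0 : (0:ℝ) < (1 - s) / 2 := by linarith
              have := Real.rpow_le_rpow_of_nonpos h0 hhalf (by linarith : -α ≤ 0)
              calc (t - s) ^ (-α) ≤ ((1 - s) / 2) ^ (-α) := this
                _ = (1 - s) ^ (-α) / 2 ^ (-α) := Real.div_rpow h1s.le (by norm_num : (0:ℝ) ≤ 2) (-α)
                _ = 2 ^ α * (1 - s) ^ (-α) := by
                    rw [Real.rpow_neg (by norm_num : (0:ℝ) ≤ 2), div_eq_mul_inv, inv_inv,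
                      mul_comm]
            calc F s = (t - s) ^ (-α) * (1 - s) ^ (-a) := rfl
              _ ≤ (2 ^ α * (1 - s) ^ (-α)) * (1 - s) ^ (-a) :=
                  mul_le_mul_of_nonneg_right hkey (Real.rpow_nonneg h1s.le _)
              _ = 2 ^ α * (1 - s) ^ (-(α + a)) := by
                  rw [mul_assoc, ← Real.rpow_add h1s, show -α + -a = -(α+a) by ring]
        _ = 2 ^ α * ((1 - (2 * ε) ^ (1 - (α + a))) / (1 - (α + a))) := by
            rw [integral_const_mul, aux_val2 hne 0 m (by linarith) (by simp [hm]; linarith),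
              show (1:ℝ) - m = 2 * ε by simp [hm, hε]; ring]
            norm_num
    have hup2 : (∫ s in m..t, F s) ≤ ε ^ (-a) * (ε ^ (1 - α) / (1 - α)) := by
      calc (∫ s in m..t, F s)
          ≤ ∫ s in m..t, ε ^ (-a) * (t - s) ^ (-α) := by
            apply integral_mono_on hmt.le (hsub m t (by linarith) hmt.le le_rfl)
              ((aux_int (by linarith) m t t).const_mul _)
            intro s hs
            rw [mul_comm (ε ^ (-a))]
            apply mul_le_mul_of_nonneg_left _ (Real.rpow_nonneg (by linarith [hs.2]) _)
            exact Real.rpow_le_rpow_of_nonpos hε0 (by simp [hε]; linarith [hs.2])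
              (by linarith)
        _ = ε ^ (-a) * (ε ^ (1 - α) / (1 - α)) := by rw [integral_const_mul, hval1]
    calc (∫ s in (0:ℝ)..t, F s) = (∫ s in (0:ℝ)..m, F s) + ∫ s in m..t, F s := hsplit.symm
      _ ≤ _ := add_le_add hup1 hup2

theorem stmt_10 (a α : ℝ) (ha0 : 0 < a) (ha1 : a < 1) (hα0 : 0 < α)
    (hα1 : α < 1) (hne : α + a ≠ 1) :
    ∃ c : ℝ, 1 < c ∧ ∀ t : ℝ, 3/4 < t → t < 1 →
      (α + a > 1 →
        c⁻¹ * (1 - t) ^ (1 - α - a) ≤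
          (∫ s in (0:ℝ)..t, (t - s) ^ (-α) * (1 - s) ^ (-a)) ∧
        (∫ s in (0:ℝ)..t, (t - s) ^ (-α) * (1 - s) ^ (-a)) ≤
          c * (1 - t) ^ (1 - α - a)) ∧
      (α + a < 1 →
        c⁻¹ ≤ (∫ s in (0:ℝ)..t, (t - s) ^ (-α) * (1 - s) ^ (-a)) ∧
        (∫ s in (0:ℝ)..t, (t - s) ^ (-α) * (1 - s) ^ (-a)) ≤ c) := by
  have habs : (0:ℝ) < |1 - α - a| := abs_pos.mpr (fun h => hne (by linarith [sub_eq_zero.mp h]))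
  have h1α : (0:ℝ) < 1 - α := by linarith
  set c : ℝ := 2 + 2 / |1 - α - a| + 2 / (1 - α) with hcdef
  have hc2 : (2:ℝ) ≤ c := by
    have h1 : (0:ℝ) ≤ 2 / |1 - α - a| := by positivity
    have h2 : (0:ℝ) ≤ 2 / (1 - α) := by positivity
    simp only [hcdef]; linarith
  have hcpos : (0:ℝ) < c := by linarith
  have hcinv : c⁻¹ ≤ 1/2 := by
    rw [inv_le_comm₀ (by linarith) (by norm_num)]
    simpa using hc2
  refine ⟨c, by linarith, ?_⟩
  intro t ht3 ht1
  obtain ⟨hlow, hlow2, hup⟩ := aux_main a α ha0 ha1 hα0 hα1 hne t ht3 ht1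
  set ε : ℝ := 1 - t with hε
  have hε0 : 0 < ε := by simp only [hε]; linarith
  have hε1 : ε ≤ 1 := by simp only [hε]; linarith
  set P : ℝ := ε ^ (1 - α - a) with hP
  have hP0 : 0 < P := Real.rpow_pos_of_pos hε0 _
  have hP1' : P ≤ 1 → True := fun _ => trivial
  have e1 : (2 * ε) ^ (-a) = 2 ^ (-a) * ε ^ (-a) :=
    Real.mul_rpow (by norm_num) hε0.le
  have e2 : ε ^ (-a) * ε ^ (1 - α) = P := by
    rw [hP, ← Real.rpow_add hε0]; congr 1; ring
  have e3 : (2 * ε) ^ (1 - (α + a)) = 2 ^ (1 - (α + a)) * ε ^ (1 - (α + a)) :=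
    Real.mul_rpow (by norm_num) hε0.le
  have eP' : ε ^ (1 - (α + a)) = P := by rw [hP]; congr 1; ring
  have e4 : (2:ℝ) ^ α * (2:ℝ) ^ (1 - (α + a)) = (2:ℝ) ^ (1 - a) := by
    rw [← Real.rpow_add (by norm_num : (0:ℝ) < 2)]; congr 1; ring
  have hP1 : α + a < 1 → P ≤ 1 := fun h => Real.rpow_le_one hε0.le hε1 (by linarith)
  clear_value P ε
  have h2a : (1/2 : ℝ) ≤ 2 ^ (-a) := by
    have := Real.rpow_le_rpow_of_exponent_le (by norm_num : (1:ℝ) ≤ 2)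
      (by linarith : -1 ≤ -a)
    rwa [Real.rpow_neg_one, show ((2:ℝ))⁻¹ = 1/2 by norm_num] at this
  have h21a : (2:ℝ) ^ (1 - a) ≤ 2 := by
    have := Real.rpow_le_rpow_of_exponent_le (by norm_num : (1:ℝ) ≤ 2)
      (by linarith : 1 - a ≤ 1)
    rwa [Real.rpow_one] at this
  have h2α : (2:ℝ) ^ α ≤ 2 := by
    have := Real.rpow_le_rpow_of_exponent_le (by norm_num : (1:ℝ) ≤ 2)
      (by linarith : α ≤ 1)
    rwa [Real.rpow_one] at this
  have h2αpos : (0:ℝ) < 2 ^ α := Real.rpow_pos_of_pos (by norm_num) _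
  constructor
  · -- α + a > 1
    intro hgt
    have habs' : |1 - α - a| = α + a - 1 := by
      rw [abs_of_neg (by linarith)]; ring
    have hd : (0:ℝ) < α + a - 1 := by linarith
    constructor
    · -- lower
      have hL : (2 * ε) ^ (-a) * (ε ^ (1 - α) / (1 - α)) = 2 ^ (-a) * P / (1 - α) := by
        rw [e1, ← e2]; ring
      have step1 : c⁻¹ * P ≤ (1/2) * P :=
        mul_le_mul_of_nonneg_right hcinv hP0.le
      have step2 : (1/2) * P ≤ 2 ^ (-a) * P :=
        mul_le_mul_of_nonneg_right h2a hP0.le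
      have step3 : 2 ^ (-a) * P ≤ 2 ^ (-a) * P / (1 - α) := by
        rw [le_div_iff₀ h1α]
        nlinarith [mul_nonneg (Real.rpow_nonneg (by norm_num : (0:ℝ) ≤ 2) (-a)) hP0.le]
      calc c⁻¹ * P ≤ 2 ^ (-a) * P / (1 - α) := by linarith
        _ = (2 * ε) ^ (-a) * (ε ^ (1 - α) / (1 - α)) := hL.symm
        _ ≤ _ := hlow
    · -- upper
      set X : ℝ := (2 * ε) ^ (1 - (α + a)) with hX
      have hXval : X = 2 ^ (1 - (α + a)) * P := by rw [e3, eP']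
      have hX0 : 0 ≤ X := Real.rpow_nonneg (by linarith) _
      have hA : 2 ^ α * ((1 - X) / (1 - (α + a))) ≤ 2 / (α + a - 1) * P := by
        have h1 : (1 - X) / (1 - (α + a)) = (X - 1) / (α + a - 1) := by
          rw [div_eq_div_iff (show (1 - (α + a)) ≠ 0 by linarith)
            (show (α + a - 1) ≠ 0 by linarith)]
          ring
        rw [h1]
        calc 2 ^ α * ((X - 1) / (α + a - 1)) ≤ 2 ^ α * (X / (α + a - 1)) :=
              mul_le_mul_of_nonneg_left ((div_le_div_iff_of_pos_right hd).mpr (by linarith)) h2αpos.le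
          _ = 2 ^ α * X / (α + a - 1) := by ring
          _ = 2 ^ (1 - a) * P / (α + a - 1) := by rw [hXval, ← mul_assoc, e4]
          _ ≤ 2 * P / (α + a - 1) :=
              (div_le_div_iff_of_pos_right hd).mpr (mul_le_mul_of_nonneg_right h21a hP0.le)
          _ = 2 / (α + a - 1) * P := by ring
      have hB : ε ^ (-a) * (ε ^ (1 - α) / (1 - α)) ≤ 2 / (1 - α) * P := by
        have h1 : ε ^ (-a) * (ε ^ (1 - α) / (1 - α)) = P / (1 - α) := by rw [← e2]; ring
        rw [h1]
        calc P / (1 - α) ≤ 2 * P / (1 - α) :=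
              (div_le_div_iff_of_pos_right h1α).mpr (by linarith)
          _ = 2 / (1 - α) * P := by ring
      have hcP : (2 / (α + a - 1) + 2 / (1 - α)) * P ≤ c * P := by
        apply mul_le_mul_of_nonneg_right _ hP0.le
        simp only [hcdef, habs']; linarith
      calc (∫ s in (0:ℝ)..t, (t - s) ^ (-α) * (1 - s) ^ (-a))
          ≤ 2 ^ α * ((1 - X) / (1 - (α + a))) + ε ^ (-a) * (ε ^ (1 - α) / (1 - α)) := hup
        _ ≤ 2 / (α + a - 1) * P + 2 / (1 - α) * P := add_le_add hA hB
        _ = (2 / (α + a - 1) + 2 / (1 - α)) * P := by ring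
        _ ≤ c * P := hcP
  · -- α + a < 1
    intro hlt
    have habs' : |1 - α - a| = 1 - α - a := abs_of_pos (by linarith)
    have hd : (0:ℝ) < 1 - (α + a) := by linarith
    refine ⟨le_trans hcinv hlow2, ?_⟩
    have hX0 : (0:ℝ) ≤ (2 * ε) ^ (1 - (α + a)) := Real.rpow_nonneg (by linarith) _
    have hA : 2 ^ α * ((1 - (2 * ε) ^ (1 - (α + a))) / (1 - (α + a))) ≤ 2 / (1 - α - a) := by
      calc 2 ^ α * ((1 - (2 * ε) ^ (1 - (α + a))) / (1 - (α + a)))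
          ≤ 2 ^ α * (1 / (1 - (α + a))) := by
            exact mul_le_mul_of_nonneg_left ((div_le_div_iff_of_pos_right hd).mpr (by linarith))
              h2αpos.le
        _ ≤ 2 * (1 / (1 - (α + a))) := by
            apply mul_le_mul_of_nonneg_right h2α
            positivity
        _ = 2 / (1 - α - a) := by rw [show 1 - (α + a) = 1 - α - a by ring]; ring
    have hB : ε ^ (-a) * (ε ^ (1 - α) / (1 - α)) ≤ 2 / (1 - α) := by
      have hPe : ε ^ (-a) * (ε ^ (1 - α) / (1 - α)) = P / (1 - α) := by rw [← e2]; ring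
      rw [hPe]
      exact (div_le_div_iff_of_pos_right h1α).mpr (by linarith [hP1 hlt])
    calc (∫ s in (0:ℝ)..t, (t - s) ^ (-α) * (1 - s) ^ (-a))
        ≤ _ := hup
      _ ≤ 2 / (1 - α - a) + 2 / (1 - α) := add_le_add hA hB
      _ ≤ c := by simp only [hcdef, habs']; linarith
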